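/- Let κ be a finite index set with an involution k ↦ k* and involution matrix Δ, let ρ be a positive definite Hermitian n×n matrix with positive semidefinite square root ρ^{1/2}, and let (L_ℓ)_{ℓ∈κ} be n×n matrices satisfying ρ^{1/2} L_k† = Σ_ℓ Δ_{kℓ} L_ℓ ρ^{1/2} (equivalently ρ^{1/2} L_k† = L_{k*} ρ^{1/2}) for all k ∈ κ. If v is a unitary κ×κ matrix with vᵀ Δ v = Δ, and L̃_k := Σ_ℓ v_{kℓ} L_ℓ for each k, then ρ^{1/2} L̃_k† = Σ_ℓ Δ_{kℓ} L̃_ℓ ρ^{1/2} = L̃_{k*} ρ^{1/2} for all k ∈ κ. -/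

import Mathlib

open Matrix BigOperators ComplexOrder

/-- Proposition 4.1: a unitary mixing `v` of the jump operators that preserves the
involution matrix `Δ` under congruence (`vᵀ Δ v = Δ`) preserves the
zero-entropy-production-rate relation `ρ^{1/2} L_k† = L_{k*} ρ^{1/2}`. -/
theorem unitary_mixing_preserves_zero_epr
    {n : ℕ} {κ : Type*} [Fintype κ] [DecidableEq κ]
    (invol : κ → κ) (hinvol : ∀ k, invol (invol k) = k)
    (ρ sqrtρ : Matrix (Fin n) (Fin n) ℂ)
    (hρ : ρ.PosDef) (hsqrt : sqrtρ.PosSemidef) (hsq : sqrtρ * sqrtρ = ρ)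
    (L : κ → Matrix (Fin n) (Fin n) ℂ)
    (hL : ∀ k, sqrtρ * (L k)ᴴ = L (invol k) * sqrtρ)
    (v : Matrix κ κ ℂ) (hv : vᴴ * v = 1)
    (hvΔ : vᵀ * Matrix.of (fun k ℓ => if invol k = ℓ then (1 : ℂ) else 0) * v =
      Matrix.of (fun k ℓ => if invol k = ℓ then (1 : ℂ) else 0)) :
    ∀ k, sqrtρ * (∑ ℓ, v k ℓ • L ℓ)ᴴ =
        ∑ ℓ, (if invol k = ℓ then (1 : ℂ) else 0) • ((∑ a, v ℓ a • L a) * sqrtρ) ∧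
      sqrtρ * (∑ ℓ, v k ℓ • L ℓ)ᴴ = (∑ ℓ, v (invol k) ℓ • L ℓ) * sqrtρ := by
  intro k
  have e := Function.Involutive.toPerm invol hinvol
  have hvv : v * vᴴ = 1 := mul_eq_one_comm.mp hv
  have hTΔ : vᵀ * Matrix.of (fun k ℓ => if invol k = ℓ then (1 : ℂ) else 0) =
      Matrix.of (fun k ℓ => if invol k = ℓ then (1 : ℂ) else 0) * vᴴ := by
    calc vᵀ * Matrix.of (fun k ℓ => if invol k = ℓ then (1 : ℂ) else 0)
        = vᵀ * Matrix.of (fun k ℓ => if invol k = ℓ then (1 : ℂ) else 0) * (v * vᴴ) := by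
          rw [hvv, mul_one]
      _ = (vᵀ * Matrix.of (fun k ℓ => if invol k = ℓ then (1 : ℂ) else 0) * v) * vᴴ := by
          simp only [mul_assoc]
      _ = _ := by rw [hvΔ]
  have hkey : ∀ k ℓ, v (invol k) ℓ = star (v k (invol ℓ)) := by
    intro a b
    have h := congrFun (congrFun hTΔ b) a
    simp only [Matrix.mul_apply, Matrix.of_apply, Matrix.transpose_apply,
      Matrix.conjTranspose_apply, ite_mul, mul_ite, one_mul, mul_one, zero_mul, mul_zero] at h
    rw [show (∑ x, if invol x = a then v x b else 0) = v (invol a) b by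
          rw [← Equiv.sum_comp (Function.Involutive.toPerm invol hinvol)]
          simp [Function.Involutive.toPerm, hinvol],
        show (∑ x, if invol b = x then star (v a x) else 0) = star (v a (invol b)) by
          simp] at h
    exact h
  have main : sqrtρ * (∑ ℓ, v k ℓ • L ℓ)ᴴ = (∑ ℓ, v (invol k) ℓ • L ℓ) * sqrtρ := by
    rw [Matrix.conjTranspose_sum, Matrix.mul_sum, Matrix.sum_mul]
    simp only [Matrix.conjTranspose_smul, mul_smul_comm, hL, Matrix.smul_mul, hkey]
    rw [← Equiv.sum_comp (Function.Involutive.toPerm invol hinvol)]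
    simp [Function.Involutive.toPerm, hinvol]
  refine ⟨?_, main⟩
  rw [main]
  simp [ite_smul, Finset.sum_ite_eq]
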